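/- Let Γ be a colored tree and MC(Γ) the set of minimally complete subsets of E(Γ). A function n : MC(Γ) → ℤ is of the form n(Y) = ⟨u, v_Y⟩ for some u ∈ M if and only if Σ_{Y ∈ MC(Γ)} m(Y) n(Y) = 0 for every function m : MC(Γ) → ℤ satisfying Σ_{Y ∈ MC(Γ), d ∈ Y} m(Y) = 0 for every edge d ∈ E(Γ). -/

import Mathlib

noncomputable section
open Classical

/-- A rose tree whose leaves ("colored vertices") carry labels of type `α` and whose
internal vertices ("uncolored vertices") are unlabelled. -/
inductive CTree (α : Type) : Type
  | leaf (a : α) : CTree α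
  | node (ts : List (CTree α)) : CTree α

namespace CTree

variable {α : Type}

/-- The subtree of `t` at a position `p` (a list of child indices), if it exists. -/
def sub : CTree α → List ℕ → Option (CTree α)
  | t, [] => some t
  | leaf _, _ :: _ => none
  | node ts, i :: p =>
      match ts[i]? with
      | some c => sub c p
      | none => none

/-- All lists of natural numbers of length at most `k` with entries `< m`. -/
def allLists (m : ℕ) : ℕ → List (List ℕ)
  | 0 => [[]]
  | k + 1 => [] :: (List.range m).flatMap (fun i => (allLists m k).map (i :: ·))

/-- The finite set of positions of vertices of `t`. -/
def vertS (t : CTree α) : Finset (List ℕ) :=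
  (allLists (sizeOf t) (sizeOf t)).toFinset.filter (fun p => (t.sub p).isSome)

/-- The finite set of positions of uncolored (internal) vertices of `t`. -/
def uncS (t : CTree α) : Finset (List ℕ) :=
  (allLists (sizeOf t) (sizeOf t)).toFinset.filter (fun p => ∃ ts, t.sub p = some (node ts))

/-- The finite set of positions of colored vertices (leaves) of `t`. -/
def colS (t : CTree α) : Finset (List ℕ) :=
  (allLists (sizeOf t) (sizeOf t)).toFinset.filter (fun p => ∃ a, t.sub p = some (leaf a))

/-- Edges of `t` are identified with the positions of non-root vertices (an edge joins
the vertex at `p ≠ []` to its parent at `p.dropLast`). -/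
def edgeS (t : CTree α) : Finset (List ℕ) := (vertS t).erase []

/-- `t` is a colored tree: every internal vertex has at least one child (so the leaves,
i.e. the childless vertices, are exactly the colored vertices) and the root is
uncolored. -/
def IsColoredTree (t : CTree α) : Prop :=
  (∀ p, t.sub p ≠ some (node ([] : List (CTree α)))) ∧ ∃ ts, t = node ts

/-- The weight `w_d ∈ M` of an edge `d`: the sum of the dual basis vectors `e_u^*`
over uncolored vertices `u` that are descendants of the upper endpoint of `d` but not
descendants of the lower endpoint of `d`. -/
def wt (t : CTree α) (d : List ℕ) : List ℕ → ℤ := fun u =>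
  if u ∈ uncS t ∧ d.dropLast <+: u ∧ ¬ d <+: u then 1 else 0

/-- `s_v ∈ M` : the sum of `e_u^*` over the uncolored descendants `u` of `v`;
`s(Γ) = sv t []`. -/
def sv (t : CTree α) (v : List ℕ) : List ℕ → ℤ := fun u =>
  if u ∈ uncS t ∧ v <+: u then 1 else 0

/-- The pairing between `M = Hom(ℤ^g, ℤ)` and `ℤ^g` (both realized as integer-valued
functions on the uncolored vertices of `t`). -/
def pairZ (t : CTree α) (μ x : List ℕ → ℤ) : ℤ := ∑ p ∈ uncS t, μ p * x p

/-- The pairing between `M` and `ℝ^g`. -/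
def pairR (t : CTree α) (μ : List ℕ → ℤ) (x : List ℕ → ℝ) : ℝ :=
  ∑ p ∈ uncS t, (μ p : ℝ) * x p

/-- The multiset of edges of the (downward) path from the vertex `v` to the vertex `c`;
each edge occurs with multiplicity one. -/
def pathEdges (t : CTree α) (v c : List ℕ) : Multiset (List ℕ) :=
  ((edgeS t).filter (fun d => v <+: d ∧ d ≠ v ∧ d <+: c)).val

/-- The relation `A ∼ B` on multisets of edges: `A` and `B` consist exactly of the edges
of two non-self-crossing paths from a common vertex to two colored vertices. -/
def Sim (t : CTree α) (A B : Multiset (List ℕ)) : Prop :=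
  ∃ v ∈ vertS t, ∃ c₁ ∈ colS t, ∃ c₂ ∈ colS t, v <+: c₁ ∧ v <+: c₂ ∧
    A = pathEdges t v c₁ ∧ B = pathEdges t v c₂

/-- `Y` is a minimally complete subset of the set of edges of `t`: every
(non-self-crossing) path from the root to a colored vertex contains exactly one edge
of `Y`. -/
def MinComplete (t : CTree α) (Y : Finset (List ℕ)) : Prop :=
  Y ⊆ edgeS t ∧ ∀ c ∈ colS t, ∃! d, d ∈ Y ∧ d <+: c

/-- The finite set of minimally complete subsets of the edge set of `t`. -/
def MCfin (t : CTree α) : Finset (Finset (List ℕ)) :=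
  (edgeS t).powerset.filter (fun Y => MinComplete t Y)

/-- The dual cone `C(Γ) = {x ∈ ℝ^g | ⟨w_d, x⟩ ≥ 0 for all edges d}`. -/
def dualCone (t : CTree α) : Set (List ℕ → ℝ) :=
  {x | (∀ p, p ∉ uncS t → x p = 0) ∧ ∀ d ∈ edgeS t, 0 ≤ pairR t (wt t d) x}

/-- The ray spanned by a vector `v`. -/
def ray (v : List ℕ → ℝ) : Set (List ℕ → ℝ) := {x | ∃ c : ℝ, 0 ≤ c ∧ x = c • v}

/-- `F` is a one-dimensional face (extreme ray) of the convex cone `C`. -/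
def IsOneDimFace (C F : Set (List ℕ → ℝ)) : Prop :=
  F ⊆ C ∧ (∃ v, v ≠ 0 ∧ F = ray v) ∧
    ∀ x ∈ C, ∀ y ∈ C, x + y ∈ F → x ∈ F ∧ y ∈ F

/-- The convex cone generated by a set `G ⊆ ℤ^g` inside `ℝ^g`: all finite nonnegative
real combinations of elements of `G`. -/
def coneHull (G : Set (List ℕ → ℤ)) : Set (List ℕ → ℝ) :=
  {x | ∃ (F : Finset (List ℕ → ℤ)) (c : (List ℕ → ℤ) → ℝ),
    ↑F ⊆ G ∧ (∀ v ∈ F, 0 ≤ c v) ∧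
    x = ∑ v ∈ F, c v • (fun p => ((v p : ℤ) : ℝ))}

/-- `e_{v_0} ∈ ℤ^g`: the basis vector of the root vertex. -/
def e0 : List ℕ → ℤ := fun p => if p = [] then 1 else 0

/-- The inclusion `ℤ^{g_i} → ℤ^g` corresponding to the `i`-th principal subtree. -/
def shift (i : ℕ) (f : List ℕ → ℤ) : List ℕ → ℤ := fun p =>
  match p with
  | [] => 0
  | j :: q => if j = i then f q else 0

def isNodeB : CTree α → Bool
  | leaf _ => false
  | node _ => true

/-- The recursively defined set `G(Γ) ⊆ ℤ^g`: `G(Γ)` consists of all vectors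
`e_{v₀} + ∑_{i ∈ J} (w_i - e_{v₀})` where `J` ranges over subsets of the set of indices
of non-trivial principal subtrees and `w_i ∈ G(Γ_i)` (in particular if `g = 1` this is
just `{e_{v₀}}`). -/
def Gset : CTree α → Set (List ℕ → ℤ)
  | leaf _ => ∅
  | node ts =>
      {v | ∃ (J : Finset (Fin ts.length)) (w : Fin ts.length → (List ℕ → ℤ)),
        (∀ i ∈ J, (ts.get i).isNodeB = true ∧ w i ∈ Gset (ts.get i)) ∧
        v = e0 + ∑ i ∈ J, (shift i.1 (w i) - e0)}
  termination_by t => sizeOf t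
  decreasing_by
    have h1 : ts.get i ∈ ts := List.get_mem ts i
    have h2 := List.sizeOf_lt_of_mem h1
    simp only [CTree.node.sizeOf_spec]
    omega

/-- Transport of a set of edges of `Γ` to the `i`-th principal subtree
(`Y ∩ E(Γ_i)`, rewritten in the coordinates of `Γ_i`). -/
def sect (i : ℕ) (Y : Finset (List ℕ)) : Finset (List ℕ) :=
  (Y.filter (fun p => p.head? = some i)).image List.tail

/-- The recursively defined vector `v_Y ∈ ℤ^g` attached to a (minimally complete) set
of edges `Y`: `v_Y = e_{v₀} + ∑_{i ∈ I} (v_{Y_i} - e_{v₀})` where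
`I = {i | d_i ∉ Y}` and `Y_i = Y ∩ E(Γ_i)` (if `g = 1` this is just `e_{v₀}`). -/
def vY : CTree α → Finset (List ℕ) → (List ℕ → ℤ)
  | leaf _, _ => 0
  | node ts, Y =>
      e0 + ∑ i ∈ Finset.univ.filter (fun i : Fin ts.length => [i.1] ∉ Y),
        (shift i.1 (vY (ts.get i) (sect i.1 Y)) - e0)
  termination_by t => sizeOf t
  decreasing_by
    have h1 : ts.get i ∈ ts := List.get_mem ts i
    have h2 := List.sizeOf_lt_of_mem h1
    simp only [CTree.node.sizeOf_spec]
    omega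

/-- The set of balanced labellings `X(Γ) ⊆ ℂ^{E(Γ)}`. -/
def Xbal (t : CTree α) : Set (List ℕ → ℂ) :=
  {x | ∀ v ∈ uncS t, ∀ c ∈ colS t, ∀ c' ∈ colS t, v <+: c → v <+: c' →
    ((pathEdges t v c).map x).prod = ((pathEdges t v c').map x).prod}

/-- `Y ⊆ E(Γ)` is complete: for every finite multiset `A` of edges, the monomial
`∏_{d ∈ A} x_d` vanishes identically on `{x ∈ X(Γ) | x_y = 0 ∀ y ∈ Y}` if and only if
`A` contains at least one edge belonging to `Y`. -/
def CompleteSet (t : CTree α) (Y : Finset (List ℕ)) : Prop :=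
  ∀ A : Multiset (List ℕ), (∀ d ∈ A, d ∈ edgeS t) →
    ((∀ x ∈ Xbal t, (∀ y ∈ Y, x y = 0) → (A.map x).prod = 0) ↔ ∃ d ∈ A, d ∈ Y)

/-- A partition of a type `I`: a finite collection of nonempty pairwise disjoint
subsets covering `I`. -/
def IsPart {I : Type} (P : Finset (Finset I)) : Prop :=
  (∀ S ∈ P, S ≠ ∅) ∧ ∀ a : I, ∃! S, S ∈ P ∧ a ∈ S

/-- The tree with a single uncolored vertex whose children are the colored vertices
labelled by the elements of `S`. -/
def blockTree {I : Type} (S : Finset I) : CTree I := node (S.toList.map leaf)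

/-- The colored tree `Γ_P` of a partition `P`: the root has one child for each block
`S ∈ P`, an uncolored vertex whose children are colored vertices labelled by the
elements of `S`. -/
def gammaP {I : Type} (P : Finset (Finset I)) : CTree I := node (P.toList.map blockTree)

/-- A tree homomorphism `t → t'`, described by a map `f` on vertex positions: it sends
root to root, vertices to vertices, the two endpoints of any edge to the two endpoints
of an edge, and restricts to a label-preserving bijection between the colored
vertices. -/
def TreeHom {I : Type} (t t' : CTree I) (f : List ℕ → List ℕ) : Prop :=
  f [] = [] ∧
  (∀ p ∈ vertS t, f p ∈ vertS t') ∧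
  (∀ p ∈ vertS t, p ≠ [] →
    (f p ≠ [] ∧ (f p).dropLast = f p.dropLast) ∨
    (f p.dropLast ≠ [] ∧ (f p.dropLast).dropLast = f p)) ∧
  (∀ p a, t.sub p = some (leaf a) → t'.sub (f p) = some (leaf a)) ∧
  Set.BijOn f {p | ∃ a, t.sub p = some (leaf a)} {q | ∃ a, t'.sub q = some (leaf a)}

/-- A partition `P` of the label set is compatible with the colored tree `t` if there
exists a tree homomorphism `t → Γ_P`. -/
def Compatible {I : Type} (t : CTree I) (P : Finset (Finset I)) : Prop :=
  ∃ f, TreeHom t (gammaP P) f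

/-- `C_y ⊆ I` : the labels of the colored vertices whose path from the root contains
the edge `y`. -/
def Cy {I : Type} [Fintype I] [DecidableEq I] (t : CTree I) (y : List ℕ) : Finset I :=
  Finset.univ.filter (fun a => ∃ p, t.sub p = some (leaf a) ∧ y <+: p)

end CTree
namespace CTree
variable {α : Type}

theorem mem_allLists {m k : ℕ} {p : List ℕ} :
    p ∈ allLists m k ↔ p.length ≤ k ∧ ∀ i ∈ p, i < m := by
  induction k generalizing p with
  | zero => simp [allLists]; rintro rfl; simp
  | succ k ih =>
    simp only [allLists, List.mem_cons, List.mem_flatMap, List.mem_range, List.mem_map]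
    constructor
    · rintro (rfl | ⟨i, hi, q, hq, rfl⟩)
      · simp
      · rcases ih.1 hq with ⟨h1, h2⟩
        refine ⟨by simpa using h1, ?_⟩
        intro j hj; rcases List.mem_cons.1 hj with rfl | hj
        · exact hi
        · exact h2 j hj
    · rintro ⟨h1, h2⟩
      cases p with
      | nil => left; rfl
      | cons i q =>
        right
        exact ⟨i, h2 i (by simp), q, ih.2 ⟨by simpa using h1, fun j hj => h2 j (by simp [hj])⟩, rfl⟩

theorem sub_append (t : CTree α) (p q : List ℕ) :
    t.sub (p ++ q) = (t.sub p).bind (fun s => s.sub q) := by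
  induction p generalizing t with
  | nil => simp [sub]
  | cons i p ih =>
    cases t with
    | leaf a => simp [sub]
    | node ts =>
      simp only [List.cons_append, sub]
      cases h : ts[i]? with
      | none => simp
      | some c => simp [ih]

theorem one_le_sizeOf (t : CTree α) : 1 ≤ sizeOf t := by
  cases t <;> simp

theorem sub_size {t : CTree α} {p : List ℕ} {s : CTree α} (h : t.sub p = some s) :
    p.length + sizeOf s ≤ sizeOf t ∧ ∀ i ∈ p, i < sizeOf t := by
  induction p generalizing t with
  | nil =>
    simp only [sub, Option.some.injEq] at h; subst h; simp
  | cons i p ih =>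
    cases t with
    | leaf a => simp [sub] at h
    | node ts =>
      simp only [sub] at h
      cases hc : ts[i]? with
      | none => simp [hc] at h
      | some c =>
        rw [hc] at h
        have hi : i < ts.length := by
          by_contra hh
          rw [List.getElem?_eq_none (by omega)] at hc; exact nomatch hc
        have hcm : c ∈ ts := by
          rcases List.getElem?_eq_some_iff.1 hc with ⟨h', rfl⟩
          exact List.getElem_mem _
        have hsz : sizeOf c < sizeOf (node ts) := by
          have := List.sizeOf_lt_of_mem hcm
          simp only [CTree.node.sizeOf_spec]; omega
        have hlen : ts.length < sizeOf ts := by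
          clear * -
          induction ts with
          | nil => simp
          | cons a l ih =>
            simp only [List.length_cons, List.cons.sizeOf_spec]
            have := one_le_sizeOf a
            omega
        rcases ih h with ⟨h1, h2⟩
        constructor
        · simp only [List.length_cons, CTree.node.sizeOf_spec] at *
          omega
        · intro j hj
          rcases List.mem_cons.1 hj with rfl | hj
          · simp only [CTree.node.sizeOf_spec]; omega
          · have := h2 j hj; omega

theorem mem_allLists_of_sub {t : CTree α} {p : List ℕ} (h : (t.sub p).isSome) :
    p ∈ (allLists (sizeOf t) (sizeOf t)).toFinset := by
  rcases Option.isSome_iff_exists.1 h with ⟨s, hs⟩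
  rcases sub_size hs with ⟨h1, h2⟩
  have := one_le_sizeOf s
  simp only [List.mem_toFinset]
  exact mem_allLists.2 ⟨by omega, h2⟩

theorem mem_vertS {t : CTree α} {p : List ℕ} :
    p ∈ vertS t ↔ (t.sub p).isSome := by
  constructor
  · intro h; exact (Finset.mem_filter.1 h).2
  · intro h; exact Finset.mem_filter.2 ⟨mem_allLists_of_sub h, h⟩

theorem mem_uncS {t : CTree α} {p : List ℕ} :
    p ∈ uncS t ↔ ∃ ts, t.sub p = some (node ts) := by
  constructor
  · intro h; exact (Finset.mem_filter.1 h).2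
  · intro h
    exact Finset.mem_filter.2 ⟨mem_allLists_of_sub (by rcases h with ⟨ts, hts⟩; simp [hts]), h⟩

theorem mem_colS {t : CTree α} {p : List ℕ} :
    p ∈ colS t ↔ ∃ a, t.sub p = some (leaf a) := by
  constructor
  · intro h; exact (Finset.mem_filter.1 h).2
  · intro h
    exact Finset.mem_filter.2 ⟨mem_allLists_of_sub (by rcases h with ⟨a, ha⟩; simp [ha]), h⟩

theorem vert_cases {t : CTree α} {p : List ℕ} (h : p ∈ vertS t) :
    p ∈ uncS t ∨ p ∈ colS t := by
  rcases Option.isSome_iff_exists.1 (mem_vertS.1 h) with ⟨s, hs⟩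
  cases s with
  | leaf a => exact Or.inr (mem_colS.2 ⟨a, hs⟩)
  | node ts => exact Or.inl (mem_uncS.2 ⟨ts, hs⟩)

theorem uncS_subset_vertS {t : CTree α} : uncS t ⊆ vertS t := by
  intro p hp
  rcases mem_uncS.1 hp with ⟨ts, hts⟩
  exact mem_vertS.2 (by simp [hts])

theorem colS_subset_vertS {t : CTree α} : colS t ⊆ vertS t := by
  intro p hp
  rcases mem_colS.1 hp with ⟨a, ha⟩
  exact mem_vertS.2 (by simp [ha])

theorem vert_prefix {t : CTree α} {p q : List ℕ} (h : q ∈ vertS t) (hpq : p <+: q) :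
    p ∈ vertS t := by
  rcases hpq with ⟨r, rfl⟩
  rw [mem_vertS] at h ⊢
  rw [sub_append] at h
  cases hs : t.sub p with
  | none => rw [hs] at h; simp at h
  | some s => simp

/-- the parent of a non-root vertex is an uncolored vertex -/
theorem parent_unc {t : CTree α} {p : List ℕ} (h : p ∈ vertS t) (hp : p ≠ []) :
    p.dropLast ∈ uncS t := by
  have hdec : p = p.dropLast ++ [p.getLast hp] := (List.dropLast_append_getLast hp).symm
  rw [mem_vertS] at h
  rw [hdec, sub_append] at h
  rw [mem_uncS]
  cases hs : t.sub p.dropLast with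
  | none => rw [hs] at h; simp at h
  | some s =>
    rw [hs] at h
    cases s with
    | leaf a => simp [sub] at h
    | node ts => exact ⟨ts, rfl⟩
end CTree
namespace CTree
variable {α : Type}

/-- every vertex has a colored descendant (in a tree with no empty nodes) -/
theorem exists_colored_desc {t : CTree α} (hne : ∀ p, t.sub p ≠ some (node ([] : List (CTree α))))
    {q : List ℕ} (h : q ∈ vertS t) : ∃ c ∈ colS t, q <+: c := by
  have key : ∀ n (s : CTree α) (q : List ℕ), sizeOf s = n → t.sub q = some s →
      ∃ c ∈ colS t, q <+: c := by
    intro n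
    induction n using Nat.strong_induction_on with
    | _ n ih =>
      intro s q hn hs
      cases s with
      | leaf a => exact ⟨q, mem_colS.2 ⟨a, hs⟩, List.prefix_refl q⟩
      | node ts =>
        cases ts with
        | nil => exact absurd hs (hne q)
        | cons c ts' =>
          have hs0 : t.sub (q ++ [0]) = some c := by
            rw [sub_append, hs]
            simp [sub]
          have hsz : sizeOf c < n := by
            subst hn
            simp only [CTree.node.sizeOf_spec, List.cons.sizeOf_spec]
            omega
          rcases ih _ hsz c (q ++ [0]) rfl hs0 with ⟨cc, hcc, hpre⟩
          exact ⟨cc, hcc, (List.prefix_append q [0]).trans hpre⟩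
  rcases Option.isSome_iff_exists.1 (mem_vertS.1 h) with ⟨s, hs⟩
  exact key _ s q rfl hs

/-- product over nonempty prefixes of `r` of (1 - indicator of membership in Y) -/
def TT (Y : Finset (List ℕ)) (r : List ℕ) : ℤ :=
  if ∃ e ∈ Y, e ≠ [] ∧ e <+: r then 0 else 1

theorem vY_node (ts : List (CTree α)) (Y : Finset (List ℕ)) :
    vY (node ts) Y =
      e0 + ∑ i ∈ Finset.univ.filter (fun i : Fin ts.length => [i.1] ∉ Y),
        (shift i.1 (vY (ts.get i) (sect i.1 Y)) - e0) := by
  rw [vY]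

theorem sect_mem {i : ℕ} {Y : Finset (List ℕ)} {e : List ℕ} :
    e ∈ sect i Y ↔ (i :: e) ∈ Y := by
  simp only [sect, Finset.mem_image, Finset.mem_filter]
  constructor
  · rintro ⟨d, ⟨hd, hh⟩, rfl⟩
    cases d with
    | nil => simp at hh
    | cons j d' =>
      simp only [List.head?_cons, Option.some.injEq] at hh
      subst hh; simpa using hd
  · intro h
    exact ⟨i :: e, ⟨h, rfl⟩, rfl⟩

theorem TT_nil {Y : Finset (List ℕ)} : TT Y [] = 1 := by
  unfold TT
  rw [if_neg]
  rintro ⟨e, _, hne, hpre⟩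
  exact hne (List.prefix_nil.1 hpre)

theorem TT_cons {Y : Finset (List ℕ)} {j : ℕ} {r : List ℕ} :
    TT Y (j :: r) = if [j] ∈ Y then 0 else TT (sect j Y) r := by
  unfold TT
  by_cases hj : [j] ∈ Y
  · rw [if_pos ⟨[j], hj, by simp, by simp⟩, if_pos hj]
  · rw [if_neg hj]
    congr 1
    simp only [eq_iff_iff]
    constructor
    · rintro ⟨e, he, hne, hpre⟩
      cases e with
      | nil => exact absurd rfl hne
      | cons k e' =>
        rcases List.cons_prefix_cons.1 hpre with ⟨rfl, hp'⟩
        refine ⟨e', sect_mem.2 he, ?_, hp'⟩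
        rintro rfl
        exact hj he
    · rintro ⟨e, he, hne, hpre⟩
      exact ⟨j :: e, sect_mem.1 he, by simp, List.cons_prefix_cons.2 ⟨rfl, hpre⟩⟩

/-- Lemma 1: the value of `v_Y` at an uncolored vertex, via products of indicators. -/
theorem vY_eq_TT {t : CTree α} {Y : Finset (List ℕ)} {p : List ℕ} {us : List (CTree α)}
    (hp : t.sub p = some (node us)) :
    vY t Y p = TT Y p - ∑ c ∈ Finset.range us.length, TT Y (p ++ [c]) := by
  induction p generalizing t Y with
  | nil =>
    simp only [sub, Option.some.injEq] at hp
    subst hp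
    rw [vY_node]
    simp only [Pi.add_apply, Finset.sum_apply, Pi.sub_apply]
    have L : ∑ i ∈ Finset.univ.filter (fun i : Fin us.length => [i.1] ∉ Y),
        (shift i.1 (vY (us.get i) (sect i.1 Y)) [] - e0 []) =
        ∑ i : Fin us.length, (if [i.1] ∈ Y then 0 else (-1 : ℤ)) := by
      rw [Finset.sum_filter]
      refine Finset.sum_congr rfl fun i _ => ?_
      by_cases h : [i.1] ∈ Y <;> simp [h, shift, e0]
    rw [L, show e0 ([] : List ℕ) = 1 by simp [e0]]
    have R : ∑ c ∈ Finset.range us.length, TT Y ([] ++ [c]) =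
        ∑ i : Fin us.length, (if [i.1] ∈ Y then 0 else (1 : ℤ)) := by
      rw [Fin.sum_univ_eq_sum_range (fun c => if [c] ∈ Y then (0:ℤ) else 1)]
      refine Finset.sum_congr rfl fun c _ => ?_
      rw [List.nil_append, TT_cons, TT_nil]
    rw [R, TT_nil]
    have hz : ∑ i : Fin us.length, (if [i.1] ∈ Y then 0 else (-1 : ℤ)) +
        ∑ i : Fin us.length, (if [i.1] ∈ Y then 0 else (1 : ℤ)) = 0 := by
      rw [← Finset.sum_add_distrib]
      apply Finset.sum_eq_zero
      intro i _
      by_cases h : [i.1] ∈ Y <;> simp [h]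
    linarith
  | cons j q ih =>
    cases t with
    | leaf a => simp [sub] at hp
    | node ts =>
      simp only [sub] at hp
      cases hc : ts[j]? with
      | none => simp [hc] at hp
      | some tj =>
        rw [hc] at hp
        change tj.sub q = some (node us) at hp
        have hjlen : j < ts.length := by
          by_contra hh
          rw [List.getElem?_eq_none (by omega)] at hc; exact nomatch hc
        have htj : ts.get ⟨j, hjlen⟩ = tj := by
          rcases List.getElem?_eq_some_iff.1 hc with ⟨h', he⟩
          exact he
        rw [vY_node]
        simp only [Pi.add_apply, Finset.sum_apply, Pi.sub_apply]
        have he0 : e0 (j :: q) = 0 := by simp [e0]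
        have L : ∑ i ∈ Finset.univ.filter (fun i : Fin ts.length => [i.1] ∉ Y),
            (shift i.1 (vY (ts.get i) (sect i.1 Y)) (j :: q) - e0 (j :: q)) =
            ∑ i : Fin ts.length, (if i = ⟨j, hjlen⟩ then
              (if [j] ∈ Y then 0 else vY tj (sect j Y) q) else 0) := by
          rw [Finset.sum_filter]
          refine Finset.sum_congr rfl fun i _ => ?_
          by_cases hij : i = ⟨j, hjlen⟩
          · subst hij
            simp only [if_pos rfl, htj, he0, shift, if_pos rfl]
            by_cases h : [j] ∈ Y <;> simp [h]
          · have hji : j ≠ i.1 := by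
              intro hh
              apply hij
              apply Fin.ext
              exact hh.symm
            simp only [if_neg hij, he0, shift, if_neg hji]
            by_cases h : [i.1] ∈ Y <;> simp [h]
        rw [L, he0, zero_add, Finset.sum_ite_eq' Finset.univ (⟨j, hjlen⟩ : Fin ts.length)]
        simp only [Finset.mem_univ, if_pos]
        by_cases hj : [j] ∈ Y
        · rw [if_pos hj]
          have hTT : ∀ r, TT Y (j :: r) = 0 := fun r => by rw [TT_cons, if_pos hj]
          rw [hTT q]
          have : ∀ c ∈ Finset.range us.length, TT Y ((j :: q) ++ [c]) = 0 := by
            intro c _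
            rw [List.cons_append, hTT]
          rw [Finset.sum_congr rfl this]
          simp
        · rw [if_neg hj, ih hp]
          have hTT : ∀ r, TT Y (j :: r) = TT (sect j Y) r := fun r => by
            rw [TT_cons, if_neg hj]
          rw [hTT q]
          congr 1
          refine Finset.sum_congr rfl fun c _ => ?_
          rw [List.cons_append, hTT]
end CTree
namespace CTree
variable {α : Type}

/-- number of (nonempty) prefixes of `r` lying in Y -/
def SC (Y : Finset (List ℕ)) (r : List ℕ) : ℤ := ((Y.filter (fun d => d <+: r)).card : ℤ)

theorem mcfin_spec {t : CTree α} {Y : Finset (List ℕ)} (hY : Y ∈ MCfin t) :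
    Y ⊆ edgeS t ∧ ∀ c ∈ colS t, ∃! d, d ∈ Y ∧ d <+: c := by
  have h := Finset.mem_filter.1 hY
  exact ⟨Finset.mem_powerset.1 h.1, h.2.2⟩

theorem nil_not_mem {t : CTree α} {Y : Finset (List ℕ)} (hY : Y ∈ MCfin t) : [] ∉ Y := by
  intro h
  have := (mcfin_spec hY).1 h
  exact (Finset.notMem_erase _ _) this

theorem SC_le_one {t : CTree α} (hne : ∀ p, t.sub p ≠ some (node ([] : List (CTree α))))
    {Y : Finset (List ℕ)} (hY : Y ∈ MCfin t) {r : List ℕ} (hr : r ∈ vertS t) :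
    (Y.filter (fun d => d <+: r)).card ≤ 1 := by
  rcases exists_colored_desc hne hr with ⟨c, hc, hrc⟩
  rcases (mcfin_spec hY).2 c hc with ⟨d, _, hun⟩
  apply Finset.card_le_one.2
  intro a ha b hb
  rw [Finset.mem_filter] at ha hb
  have ha' := hun a ⟨ha.1, ha.2.trans hrc⟩
  have hb' := hun b ⟨hb.1, hb.2.trans hrc⟩
  rw [ha', hb']

theorem SC_colored {t : CTree α} {Y : Finset (List ℕ)} (hY : Y ∈ MCfin t)
    {c : List ℕ} (hc : c ∈ colS t) : (Y.filter (fun d => d <+: c)).card = 1 := by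
  rcases (mcfin_spec hY).2 c hc with ⟨d, hd, hun⟩
  rw [Finset.card_eq_one]
  refine ⟨d, Finset.eq_singleton_iff_unique_mem.2 ⟨Finset.mem_filter.2 ⟨hd.1, hd.2⟩, ?_⟩⟩
  intro x hx
  rw [Finset.mem_filter] at hx
  exact hun x hx

theorem TT_eq_SC {t : CTree α} (hne : ∀ p, t.sub p ≠ some (node ([] : List (CTree α))))
    {Y : Finset (List ℕ)} (hY : Y ∈ MCfin t) {r : List ℕ} (hr : r ∈ vertS t) :
    TT Y r = 1 - SC Y r := by
  have hle := SC_le_one hne hY hr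
  have hnil := nil_not_mem hY
  unfold TT SC
  by_cases h : ∃ e ∈ Y, e ≠ [] ∧ e <+: r
  · rw [if_pos h]
    rcases h with ⟨e, he, _, hpre⟩
    have : 0 < (Y.filter (fun d => d <+: r)).card :=
      Finset.card_pos.2 ⟨e, Finset.mem_filter.2 ⟨he, hpre⟩⟩
    omega
  · rw [if_neg h]
    have : (Y.filter (fun d => d <+: r)).card = 0 := by
      rw [Finset.card_eq_zero]
      rw [Finset.eq_empty_iff_forall_notMem]
      intro e he
      rw [Finset.mem_filter] at he
      apply h
      refine ⟨e, he.1, ?_, he.2⟩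
      rintro rfl
      exact hnil he.1
    omega

theorem TT_colored_eq_zero {t : CTree α} {Y : Finset (List ℕ)} (hY : Y ∈ MCfin t)
    {c : List ℕ} (hc : c ∈ colS t) : TT Y c = 0 := by
  have h1 := SC_colored hY hc
  have hnil := nil_not_mem hY
  unfold TT
  rw [if_pos]
  rcases Finset.card_eq_one.1 h1 with ⟨d, hd⟩
  have : d ∈ Y.filter (fun d => d <+: c) := by rw [hd]; exact Finset.mem_singleton_self d
  rw [Finset.mem_filter] at this
  exact ⟨d, this.1, by rintro rfl; exact hnil this.1, this.2⟩

/-- the children of an uncolored vertex, as a finset of vertices -/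
theorem children_image {t : CTree α} {q : List ℕ} {us : List (CTree α)}
    (hq : t.sub q = some (node us)) :
    Finset.image (fun c => q ++ [c]) (Finset.range us.length) =
      (vertS t).filter (fun r => r ≠ [] ∧ r.dropLast = q) := by
  ext r
  simp only [Finset.mem_image, Finset.mem_range, Finset.mem_filter]
  constructor
  · rintro ⟨c, hc, rfl⟩
    refine ⟨mem_vertS.2 ?_, by simp, by simp⟩
    rw [sub_append, hq]
    show ((node us).sub [c]).isSome
    simp only [sub]
    rw [List.getElem?_eq_getElem hc]
    simp
  · rintro ⟨hr, hne, hdrop⟩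
    have hlast := List.dropLast_append_getLast hne
    refine ⟨r.getLast hne, ?_, by rw [← hdrop]; exact hlast⟩
    have : (t.sub (q ++ [r.getLast hne])).isSome := by
      rw [show q ++ [r.getLast hne] = r by rw [← hdrop]; exact hlast]
      exact mem_vertS.1 hr
    rw [sub_append, hq] at this
    change ((node us).sub [r.getLast hne]).isSome at this
    simp only [sub] at this
    cases hg : us[r.getLast hne]? with
    | none =>
      rw [hg] at this; simp at this
    | some c =>
      by_contra hh
      rw [List.getElem?_eq_none (by omega)] at hg
      exact nomatch hg

theorem sum_children {t : CTree α} {q : List ℕ} {us : List (CTree α)}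
    (hq : t.sub q = some (node us)) (f : List ℕ → ℤ) :
    ∑ c ∈ Finset.range us.length, f (q ++ [c]) =
      ∑ r ∈ (vertS t).filter (fun r => r ≠ [] ∧ r.dropLast = q), f r := by
  rw [← children_image hq, Finset.sum_image]
  intro a _ b _ h
  simpa using h

end CTree
namespace CTree
variable {α : Type}

theorem unc_col_disj {t : CTree α} {p : List ℕ} (h1 : p ∈ uncS t) (h2 : p ∈ colS t) : False := by
  rcases mem_uncS.1 h1 with ⟨ts, hts⟩
  rcases mem_colS.1 h2 with ⟨a, ha⟩
  rw [hts] at ha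
  exact nomatch ha

theorem prefix_ne_lt {q r : List ℕ} (h : q <+: r) (hne : r ≠ q) : q.length < r.length := by
  rcases Nat.lt_or_ge q.length r.length with h' | h'
  · exact h'
  · exact absurd (List.IsPrefix.eq_of_length h (le_antisymm (h.length_le) h')).symm hne

/-- Telescoping: the sum of `v_Y` over the uncolored descendants of an uncolored
vertex `q` equals `TT Y q`. -/
theorem sum_vY_desc {t : CTree α} (hne : ∀ p, t.sub p ≠ some (node ([] : List (CTree α))))
    {Y : Finset (List ℕ)} (hY : Y ∈ MCfin t) {q : List ℕ} (hq : q ∈ uncS t) :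
    ∑ p ∈ (uncS t).filter (fun p => q <+: p), vY t Y p = TT Y q := by
  classical
  set U := (uncS t).filter (fun p => q <+: p) with hU
  set child : List ℕ → Finset (List ℕ) :=
    fun p => (vertS t).filter (fun r => r ≠ [] ∧ r.dropLast = p) with hchild
  have step1 : ∑ p ∈ U, vY t Y p = ∑ p ∈ U, (TT Y p - ∑ r ∈ child p, TT Y r) := by
    refine Finset.sum_congr rfl fun p hp => ?_
    obtain ⟨us, hus⟩ := mem_uncS.1 (Finset.mem_filter.1 hp).1
    rw [vY_eq_TT hus, sum_children hus]
  rw [step1, Finset.sum_sub_distrib]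
  have hdisj : (U : Set (List ℕ)).PairwiseDisjoint child := by
    intro p1 _ p2 _ hp12
    simp only [Function.onFun]
    rw [Finset.disjoint_left]
    intro r hr1 hr2
    rw [hchild] at hr1 hr2
    simp only [Finset.mem_filter] at hr1 hr2
    exact hp12 (hr1.2.2 ▸ hr2.2.2)
  have hbi : U.biUnion child = (vertS t).filter (fun r => q <+: r ∧ r ≠ q) := by
    ext r
    simp only [Finset.mem_biUnion, hU, hchild, Finset.mem_filter]
    constructor
    · rintro ⟨p, ⟨hpu, hqp⟩, hrv, hrne, hrd⟩
      have hdp : r.dropLast <+: r := List.dropLast_prefix r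
      have h1 : q <+: r := (hrd ▸ hqp).trans hdp
      refine ⟨hrv, h1, ?_⟩
      intro hrq
      have hl1 : q.length ≤ p.length := hqp.length_le
      have hl2 : p.length = r.length - 1 := by rw [← hrd, List.length_dropLast]
      have hl3 : 1 ≤ r.length := by
        cases r
        · exact absurd rfl hrne
        · simp
      subst hrq
      omega
    · rintro ⟨hrv, hqr, hrq⟩
      have hrne : r ≠ [] := by
        rintro rfl
        exact hrq (List.prefix_nil.1 hqr).symm
      refine ⟨r.dropLast, ⟨parent_unc hrv hrne, ?_⟩, hrv, hrne, rfl⟩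
      apply List.prefix_of_prefix_length_le hqr (List.dropLast_prefix r)
      have := prefix_ne_lt hqr hrq
      rw [List.length_dropLast]
      omega
  rw [← Finset.sum_biUnion hdisj, hbi]
  set A := (uncS t).filter (fun p => q <+: p ∧ p ≠ q) with hA
  set B := (colS t).filter (fun c => q <+: c) with hB
  have hsplit : (vertS t).filter (fun r => q <+: r ∧ r ≠ q) = A ∪ B := by
    ext r
    simp only [hA, hB, Finset.mem_union, Finset.mem_filter]
    constructor
    · rintro ⟨hrv, hqr, hrq⟩
      rcases vert_cases hrv with h | h
      · exact Or.inl ⟨h, hqr, hrq⟩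
      · exact Or.inr ⟨h, hqr⟩
    · rintro (⟨h, hqr, hrq⟩ | ⟨h, hqr⟩)
      · exact ⟨uncS_subset_vertS h, hqr, hrq⟩
      · refine ⟨colS_subset_vertS h, hqr, ?_⟩
        rintro rfl
        exact unc_col_disj hq h
  have hAB : Disjoint A B := by
    rw [Finset.disjoint_left]
    intro r h1 h2
    exact unc_col_disj (Finset.mem_filter.1 h1).1 (Finset.mem_filter.1 h2).1
  rw [hsplit, Finset.sum_union hAB]
  have hBzero : ∑ r ∈ B, TT Y r = 0 := by
    apply Finset.sum_eq_zero
    intro c hc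
    exact TT_colored_eq_zero hY (Finset.mem_filter.1 hc).1
  rw [hBzero, add_zero]
  have hUA : U = insert q A := by
    ext p
    simp only [hU, hA, Finset.mem_insert, Finset.mem_filter]
    constructor
    · rintro ⟨hpu, hqp⟩
      by_cases h : p = q
      · exact Or.inl h
      · exact Or.inr ⟨hpu, hqp, h⟩
    · rintro (rfl | ⟨hpu, hqp, _⟩)
      · exact ⟨hq, List.prefix_refl _⟩
      · exact ⟨hpu, hqp⟩
  have hqA : q ∉ A := by
    simp only [hA, Finset.mem_filter]
    rintro ⟨_, _, h⟩
    exact h rfl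
  rw [hUA, Finset.sum_insert hqA]
  ring
end CTree
namespace CTree
variable {α : Type}

/-- the minimally complete set of edges "cutting just below the path to `p`" -/
def Ystar (t : CTree α) (p : List ℕ) : Finset (List ℕ) :=
  (edgeS t).filter (fun d => d.dropLast <+: p ∧ ¬ d <+: p)

theorem Ystar_first_edge {t : CTree α} {p r : List ℕ} (hr : r ∈ vertS t)
    (hnp : ¬ r <+: p) : ∃ d ∈ Ystar t p, d <+: r := by
  classical
  set k := Nat.findGreatest (fun i => r.take i <+: p) r.length with hk
  have hPk : r.take k <+: p :=
    Nat.findGreatest_spec (P := fun i => r.take i <+: p) (Nat.zero_le _) (by simp)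
  have hkle : k ≤ r.length := Nat.findGreatest_le _
  have hklt : k < r.length := by
    rcases Nat.lt_or_ge k r.length with h | h
    · exact h
    · exfalso
      apply hnp
      have : r.take k = r := List.take_of_length_le (by omega)
      rwa [this] at hPk
  set d := r.take (k + 1) with hd
  have hdr : d <+: r := List.take_prefix _ _
  have hdlen : d.length = k + 1 := by
    rw [hd, List.length_take]
    omega
  have hdne : d ≠ [] := by
    intro h
    rw [h] at hdlen
    simp at hdlen
  have hdv : d ∈ vertS t := vert_prefix hr hdr
  have hddrop : d.dropLast = r.take k := by
    rw [hd, List.dropLast_eq_take, hdlen]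
    simp [List.take_take]
  have hdnp : ¬ d <+: p := by
    intro h
    exact Nat.findGreatest_is_greatest (P := fun i => r.take i <+: p) (n := r.length)
      (k := k + 1) (by rw [hk]; omega) (by omega) h
  exact ⟨d, Finset.mem_filter.2 ⟨Finset.mem_erase.2 ⟨hdne, hdv⟩,
    by rw [hddrop]; exact hPk, hdnp⟩, hdr⟩

theorem TT_Ystar {t : CTree α} {p r : List ℕ} (hr : r ∈ vertS t) :
    TT (Ystar t p) r = if r <+: p then 1 else 0 := by
  unfold TT
  by_cases h : r <+: p
  · rw [if_pos h, if_neg]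
    rintro ⟨e, he, hene, hepre⟩
    rcases Finset.mem_filter.1 he with ⟨_, _, henp⟩
    exact henp (hepre.trans h)
  · rw [if_neg h, if_pos]
    rcases Ystar_first_edge hr h with ⟨d, hd, hdr⟩
    have hdne : d ≠ [] := (Finset.mem_erase.1 (Finset.mem_filter.1 hd).1).1
    exact ⟨d, hd, hdne, hdr⟩

theorem col_prefix_vert {t : CTree α} {c r : List ℕ} (hc : c ∈ colS t) (hr : r ∈ vertS t)
    (h : c <+: r) : r = c := by
  rcases mem_colS.1 hc with ⟨a, ha⟩
  rcases h with ⟨s, rfl⟩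
  cases s with
  | nil => simp
  | cons i s' =>
    exfalso
    have := mem_vertS.1 hr
    rw [sub_append, ha] at this
    change ((leaf a : CTree α).sub (i :: s')).isSome at this
    simp [sub] at this

theorem Ystar_mem_MCfin {t : CTree α} {p : List ℕ} (hp : p ∈ uncS t) :
    Ystar t p ∈ MCfin t := by
  refine Finset.mem_filter.2 ⟨Finset.mem_powerset.2 (Finset.filter_subset _ _),
    Finset.filter_subset _ _, ?_⟩
  intro c hc
  have hcnp : ¬ c <+: p := by
    intro h
    have := col_prefix_vert hc (uncS_subset_vertS hp) h
    subst this
    exact unc_col_disj hp hc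
  rcases Ystar_first_edge (colS_subset_vertS hc) hcnp with ⟨d, hd, hdc⟩
  refine ⟨d, ⟨hd, hdc⟩, ?_⟩
  rintro e ⟨he, hec⟩
  rcases Finset.mem_filter.1 he with ⟨hee, hedrop, henp⟩
  rcases Finset.mem_filter.1 hd with ⟨hde, hddrop, hdnp⟩
  by_contra hne
  rcases List.prefix_or_prefix_of_prefix hec hdc with h | h
  · -- e <+: d, e ≠ d so e <+: d.dropLast <+: p
    have hlt : e.length < d.length := prefix_ne_lt h (Ne.symm hne)
    have : e <+: d.dropLast := by
      apply List.prefix_of_prefix_length_le h (List.dropLast_prefix d)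
      rw [List.length_dropLast]
      omega
    exact henp (this.trans hddrop)
  · have hlt : d.length < e.length := prefix_ne_lt h hne
    have : d <+: e.dropLast := by
      apply List.prefix_of_prefix_length_le h (List.dropLast_prefix e)
      rw [List.length_dropLast]
      omega
    exact hdnp (this.trans hedrop)

theorem vY_Ystar {t : CTree α} {p q : List ℕ} (hp : p ∈ uncS t) (hq : q ∈ uncS t) :
    vY t (Ystar t p) q = if q = p then 1 else 0 := by
  obtain ⟨us, hus⟩ := mem_uncS.1 hq
  rw [vY_eq_TT hus]
  have hqv : q ∈ vertS t := uncS_subset_vertS hq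
  have hchild : ∀ c ∈ Finset.range us.length, q ++ [c] ∈ vertS t := by
    intro c hc
    have : q ++ [c] ∈ Finset.image (fun c => q ++ [c]) (Finset.range us.length) :=
      Finset.mem_image.2 ⟨c, hc, rfl⟩
    rw [children_image hus] at this
    exact (Finset.mem_filter.1 this).1
  rw [TT_Ystar hqv]
  have hTTc : ∀ c ∈ Finset.range us.length,
      TT (Ystar t p) (q ++ [c]) = if q ++ [c] <+: p then 1 else 0 := by
    intro c hc
    exact TT_Ystar (hchild c hc)
  rw [Finset.sum_congr rfl hTTc]
  by_cases hqp : q = p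
  · subst hqp
    rw [if_pos rfl, if_pos (List.prefix_refl q)]
    have : ∀ c ∈ Finset.range us.length, (if q ++ [c] <+: q then (1:ℤ) else 0) = 0 := by
      intro c _
      rw [if_neg]
      intro h
      have := h.length_le
      simp at this
    rw [Finset.sum_congr rfl this]
    simp
  · rw [if_neg hqp]
    by_cases hpre : q <+: p
    · rw [if_pos hpre]
      rcases hpre with ⟨s, rfl⟩
      cases s with
      | nil => exact absurd (by simp) hqp
      | cons c0 s' =>
        have hc0mem : c0 ∈ Finset.range us.length := by
          have hvert : q ++ [c0] ∈ vertS t := by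
            apply vert_prefix (uncS_subset_vertS hp)
            rw [List.prefix_append_right_inj]
            exact ⟨s', rfl⟩
          have hmemf : q ++ [c0] ∈ (vertS t).filter (fun r => r ≠ [] ∧ r.dropLast = q) :=
            Finset.mem_filter.2 ⟨hvert, by simp, by simp⟩
          rw [← children_image hus] at hmemf
          rcases Finset.mem_image.1 hmemf with ⟨c, hc, hcc⟩
          have hcec : c = c0 := by simpa using hcc
          exact hcec ▸ hc
        have hterm : ∀ c ∈ Finset.range us.length,
            (if q ++ [c] <+: q ++ c0 :: s' then (1:ℤ) else 0) = if c = c0 then 1 else 0 := by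
          intro c _
          by_cases h : c = c0
          · subst h
            rw [if_pos (by rw [List.prefix_append_right_inj]; exact ⟨s', rfl⟩), if_pos rfl]
          · rw [if_neg, if_neg h]
            intro hh
            rw [List.prefix_append_right_inj] at hh
            rcases List.cons_prefix_cons.1 hh with ⟨rfl, _⟩
            exact h rfl
        rw [Finset.sum_congr rfl hterm, Finset.sum_ite_eq' (Finset.range us.length) c0]
        rw [if_pos hc0mem]
        ring
    · rw [if_neg hpre]
      have : ∀ c ∈ Finset.range us.length, (if q ++ [c] <+: p then (1:ℤ) else 0) = 0 := by
        intro c _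
        rw [if_neg]
        intro h
        exact hpre ((List.prefix_append q [c]).trans h)
      rw [Finset.sum_congr rfl this]
      simp
end CTree
namespace CTree
variable {α : Type}

theorem child_vert {t : CTree α} {q : List ℕ} {us : List (CTree α)}
    (hus : t.sub q = some (node us)) {c : ℕ} (hc : c ∈ Finset.range us.length) :
    q ++ [c] ∈ vertS t := by
  have : q ++ [c] ∈ Finset.image (fun c => q ++ [c]) (Finset.range us.length) :=
    Finset.mem_image.2 ⟨c, hc, rfl⟩
  rw [children_image hus] at this
  exact (Finset.mem_filter.1 this).1

theorem SC_diff {Y : Finset (List ℕ)} {d : List ℕ} (hdne : d ≠ []) :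
    SC Y d - SC Y d.dropLast = if d ∈ Y then 1 else 0 := by
  classical
  set F1 := Y.filter (fun e => e <+: d.dropLast) with hF1
  set F2 := Y.filter (fun e => e <+: d) with hF2
  have hsub : F1 ⊆ F2 := by
    intro e he
    rw [hF1, Finset.mem_filter] at he
    exact Finset.mem_filter.2 ⟨he.1, he.2.trans (List.dropLast_prefix d)⟩
  have hlen : 1 ≤ d.length := by
    cases d
    · exact absurd rfl hdne
    · simp
  have hsd : F2 \ F1 = if d ∈ Y then {d} else ∅ := by
    ext e
    rw [Finset.mem_sdiff, hF1, hF2, Finset.mem_filter, Finset.mem_filter]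
    constructor
    · rintro ⟨⟨heY, hed⟩, hnot⟩
      have hed' : e = d := by
        by_contra hne
        apply hnot
        refine ⟨heY, ?_⟩
        have hl : e.length < d.length := prefix_ne_lt hed (Ne.symm hne)
        apply List.prefix_of_prefix_length_le hed (List.dropLast_prefix d)
        rw [List.length_dropLast]
        omega
      subst hed'
      rw [if_pos heY]
      exact Finset.mem_singleton_self e
    · intro he
      by_cases hdY : d ∈ Y
      · rw [if_pos hdY, Finset.mem_singleton] at he
        subst he
        refine ⟨⟨hdY, List.prefix_refl _⟩, ?_⟩
        rintro ⟨-, hpre⟩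
        have := hpre.length_le
        rw [List.length_dropLast] at this
        omega
      · rw [if_neg hdY] at he
        exact absurd he (Finset.notMem_empty e)
  have hcard := Finset.card_sdiff_add_card_eq_card hsub
  rw [hsd] at hcard
  unfold SC
  rw [← hF1, ← hF2]
  by_cases hdY : d ∈ Y
  · rw [if_pos hdY] at hcard ⊢
    simp only [Finset.card_singleton] at hcard
    push_cast
    omega
  · rw [if_neg hdY] at hcard ⊢
    simp only [Finset.card_empty] at hcard
    push_cast
    omega

/-- the membership indicator of an edge is recovered from the values of `v_Y` -/
theorem chi_eq_sum {t : CTree α} (hne : ∀ p, t.sub p ≠ some (node ([] : List (CTree α))))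
    {Y : Finset (List ℕ)} (hY : Y ∈ MCfin t) {d : List ℕ} (hd : d ∈ edgeS t) :
    (if d ∈ Y then (1 : ℤ) else 0) =
      ∑ q ∈ uncS t, ((if d.dropLast <+: q then (1:ℤ) else 0)
        - (if d ∈ uncS t ∧ d <+: q then 1 else 0)) * vY t Y q := by
  have hdne : d ≠ [] := (Finset.mem_erase.1 hd).1
  have hdv : d ∈ vertS t := (Finset.mem_erase.1 hd).2
  have hpar : d.dropLast ∈ uncS t := parent_unc hdv hdne
  have hsplit : ∑ q ∈ uncS t, ((if d.dropLast <+: q then (1:ℤ) else 0)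
        - (if d ∈ uncS t ∧ d <+: q then 1 else 0)) * vY t Y q =
      (∑ q ∈ uncS t, if d.dropLast <+: q then vY t Y q else 0)
        - ∑ q ∈ uncS t, if d ∈ uncS t ∧ d <+: q then vY t Y q else 0 := by
    rw [← Finset.sum_sub_distrib]
    refine Finset.sum_congr rfl fun q _ => ?_
    rw [sub_mul]
    congr 1 <;> split <;> simp
  rw [hsplit, ← Finset.sum_filter, ← Finset.sum_filter, sum_vY_desc hne hY hpar]
  have hterm2 : ∑ q ∈ (uncS t).filter (fun q => d ∈ uncS t ∧ d <+: q), vY t Y q =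
      if d ∈ uncS t then TT Y d else 0 := by
    by_cases hdu : d ∈ uncS t
    · rw [if_pos hdu, ← sum_vY_desc hne hY hdu]
      apply Finset.sum_congr _ (fun _ _ => rfl)
      apply Finset.filter_congr
      intro q _
      simp [hdu]
    · rw [if_neg hdu]
      apply Finset.sum_eq_zero
      intro q hq
      exact absurd (Finset.mem_filter.1 hq).2.1 hdu
  rw [hterm2, TT_eq_SC hne hY (uncS_subset_vertS hpar)]
  have hdiff := SC_diff (Y := Y) hdne
  rcases vert_cases hdv with hdu | hdc
  · rw [if_pos hdu, TT_eq_SC hne hY hdv]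
    linarith
  · rw [if_neg (fun h => unc_col_disj h hdc)]
    have h1 : SC Y d = 1 := by
      unfold SC
      rw [SC_colored hY hdc]
      norm_num
    linarith

theorem root_unc {t : CTree α} (ht : t.IsColoredTree) : [] ∈ uncS t := by
  rcases ht.2 with ⟨ts, rfl⟩
  exact mem_uncS.2 ⟨ts, rfl⟩

theorem exists_col {t : CTree α} (ht : t.IsColoredTree) : ∃ c, c ∈ colS t := by
  rcases exists_colored_desc ht.1 (uncS_subset_vertS (root_unc ht)) with ⟨c, hc, -⟩
  exact ⟨c, hc⟩

section mlem
variable {t : CTree α} {m : Finset (List ℕ) → ℤ}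

theorem sum_m_SC
    (hm : ∀ d ∈ edgeS t, ∑ Y ∈ (MCfin t).filter (fun Y => d ∈ Y), m Y = 0) (r : List ℕ) :
    ∑ Y ∈ MCfin t, m Y * SC Y r = 0 := by
  classical
  have hrepr : ∀ Y ∈ MCfin t, m Y * SC Y r =
      ∑ d ∈ (edgeS t).filter (fun d => d <+: r), (if d ∈ Y then m Y else 0) := by
    intro Y hY
    have hYsub := (mcfin_spec hY).1
    have h1 : Y.filter (fun e => e <+: r) =
        ((edgeS t).filter (fun d => d <+: r)).filter (fun d => d ∈ Y) := by
      ext e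
      simp only [Finset.mem_filter]
      constructor
      · rintro ⟨h1, h2⟩
        exact ⟨⟨hYsub h1, h2⟩, h1⟩
      · rintro ⟨⟨_, h2⟩, h3⟩
        exact ⟨h3, h2⟩
    have h2 : SC Y r = ∑ d ∈ (edgeS t).filter (fun d => d <+: r),
        (if d ∈ Y then (1:ℤ) else 0) := by
      unfold SC
      rw [h1, Finset.card_filter]
      push_cast
      rfl
    rw [h2, Finset.mul_sum]
    refine Finset.sum_congr rfl fun d _ => ?_
    split <;> simp
  rw [Finset.sum_congr rfl hrepr, Finset.sum_comm]
  apply Finset.sum_eq_zero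
  intro d hd
  have hd' := (Finset.mem_filter.1 hd).1
  rw [← Finset.sum_filter]
  exact hm d hd'

theorem sum_m_total (ht : t.IsColoredTree)
    (hm : ∀ d ∈ edgeS t, ∑ Y ∈ (MCfin t).filter (fun Y => d ∈ Y), m Y = 0) :
    ∑ Y ∈ MCfin t, m Y = 0 := by
  rcases exists_col ht with ⟨c₀, hc₀⟩
  have : ∀ Y ∈ MCfin t, m Y = m Y * SC Y c₀ := by
    intro Y hY
    have h1 : SC Y c₀ = 1 := by
      unfold SC
      rw [SC_colored hY hc₀]
      norm_num
    rw [h1, mul_one]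
  rw [Finset.sum_congr rfl this, sum_m_SC hm]

theorem forward_core (ht : t.IsColoredTree)
    (hm : ∀ d ∈ edgeS t, ∑ Y ∈ (MCfin t).filter (fun Y => d ∈ Y), m Y = 0)
    {q : List ℕ} (hq : q ∈ uncS t) :
    ∑ Y ∈ MCfin t, m Y * vY t Y q = 0 := by
  obtain ⟨us, hus⟩ := mem_uncS.1 hq
  have hqv := uncS_subset_vertS hq
  have hrepr : ∀ Y ∈ MCfin t, m Y * vY t Y q =
      (m Y - m Y * SC Y q) -
        ∑ c ∈ Finset.range us.length, (m Y - m Y * SC Y (q ++ [c])) := by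
    intro Y hY
    have h1 : vY t Y q = (1 - SC Y q) -
        ∑ c ∈ Finset.range us.length, (1 - SC Y (q ++ [c])) := by
      rw [vY_eq_TT hus, TT_eq_SC ht.1 hY hqv]
      congr 1
      exact Finset.sum_congr rfl fun c hc => TT_eq_SC ht.1 hY (child_vert hus hc)
    rw [h1, mul_sub, mul_sub, mul_one, Finset.mul_sum]
    congr 1
    exact Finset.sum_congr rfl fun c _ => by rw [mul_sub, mul_one]
  rw [Finset.sum_congr rfl hrepr, Finset.sum_sub_distrib, Finset.sum_sub_distrib,
    sum_m_SC hm, sum_m_total ht hm, Finset.sum_comm]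
  have : ∀ c ∈ Finset.range us.length,
      ∑ Y ∈ MCfin t, (m Y - m Y * SC Y (q ++ [c])) = 0 := by
    intro c _
    rw [Finset.sum_sub_distrib, sum_m_SC hm, sum_m_total ht hm, sub_zero]
  rw [Finset.sum_congr rfl this]
  simp
end mlem
end CTree
/-- A function `n : MC(Γ) → ℤ` is of the form `n(Y) = ⟨u, v_Y⟩` for
some `u ∈ M` if and only if `∑_Y m(Y) n(Y) = 0` for every `m : MC(Γ) → ℤ` satisfying
`∑_{Y ∋ d} m(Y) = 0` for every edge `d ∈ E(Γ)`. -/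
theorem form_pairing_vY_iff_orthogonal_relations {α : Type} (t : CTree α)
    (ht : t.IsColoredTree) (n : Finset (List ℕ) → ℤ) :
    (∃ u : List ℕ → ℤ, ∀ Y ∈ CTree.MCfin t, n Y = CTree.pairZ t u (CTree.vY t Y)) ↔
      ∀ m : Finset (List ℕ) → ℤ,
        (∀ d ∈ CTree.edgeS t,
          ∑ Y ∈ (CTree.MCfin t).filter (fun Y => d ∈ Y), m Y = 0) →
        ∑ Y ∈ CTree.MCfin t, m Y * n Y = 0 := by
  classical
  open CTree in
  constructor
  · rintro ⟨u, hu⟩ m hm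
    have h1 : ∀ Y ∈ MCfin t, m Y * n Y = ∑ q ∈ uncS t, u q * (m Y * vY t Y q) := by
      intro Y hY
      rw [hu Y hY]
      unfold pairZ
      rw [Finset.mul_sum]
      exact Finset.sum_congr rfl fun q _ => by ring
    rw [Finset.sum_congr rfl h1, Finset.sum_comm]
    apply Finset.sum_eq_zero
    intro q hq
    rw [← Finset.mul_sum, forward_core ht hm hq, mul_zero]
  · intro H
    refine ⟨fun q => if q ∈ uncS t then n (Ystar t q) else 0, ?_⟩
    intro Y₀ hY₀
    set m : Finset (List ℕ) → ℤ := fun Y =>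
      (if Y = Y₀ then 1 else 0)
        - ∑ p ∈ uncS t, vY t Y₀ p * (if Y = Ystar t p then 1 else 0) with hmdef
    have hsum : ∀ (F : Finset (Finset (List ℕ))) (g : Finset (List ℕ) → ℤ),
        ∑ Y ∈ F, m Y * g Y =
          (if Y₀ ∈ F then g Y₀ else 0)
            - ∑ p ∈ uncS t, vY t Y₀ p *
                (if Ystar t p ∈ F then g (Ystar t p) else 0) := by
      intro F g
      have hterm : ∀ Y ∈ F, m Y * g Y = (if Y = Y₀ then g Y else 0)
          - ∑ p ∈ uncS t, vY t Y₀ p * (if Y = Ystar t p then g Y else 0) := by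
        intro Y _
        rw [hmdef]
        simp only []
        rw [sub_mul, Finset.sum_mul]
        congr 1
        · split <;> simp
        · refine Finset.sum_congr rfl fun p _ => ?_
          rw [mul_assoc]
          congr 1
          split <;> simp
      rw [Finset.sum_congr rfl hterm, Finset.sum_sub_distrib,
        Finset.sum_ite_eq' F Y₀ g]
      congr 1
      rw [Finset.sum_comm]
      refine Finset.sum_congr rfl fun p _ => ?_
      rw [← Finset.mul_sum, Finset.sum_ite_eq' F (Ystar t p) g]
    have hkey : ∀ q ∈ uncS t,
        ∑ p ∈ uncS t, vY t Y₀ p * vY t (Ystar t p) q = vY t Y₀ q := by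
      intro q hq
      have hterm : ∀ p ∈ uncS t,
          vY t Y₀ p * vY t (Ystar t p) q = if p = q then vY t Y₀ p else 0 := by
        intro p hp
        rw [vY_Ystar hp hq]
        by_cases h : p = q
        · subst h; simp
        · rw [if_neg h, if_neg (fun hh => h hh.symm), mul_zero]
      rw [Finset.sum_congr rfl hterm, Finset.sum_ite_eq' (uncS t) q (vY t Y₀), if_pos hq]
    have hm : ∀ d ∈ edgeS t, ∑ Y ∈ (MCfin t).filter (fun Y => d ∈ Y), m Y = 0 := by
      intro d hd
      have h0 := hsum ((MCfin t).filter (fun Y => d ∈ Y)) (fun _ => 1)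
      simp only [mul_one] at h0
      rw [h0]
      have e1 : (if Y₀ ∈ (MCfin t).filter (fun Y => d ∈ Y) then (1:ℤ) else 0) =
          (if d ∈ Y₀ then 1 else 0) := by
        by_cases h : d ∈ Y₀ <;> simp [Finset.mem_filter, hY₀, h]
      have e2 : ∀ p ∈ uncS t, vY t Y₀ p *
          (if Ystar t p ∈ (MCfin t).filter (fun Y => d ∈ Y) then (1:ℤ) else 0) =
          vY t Y₀ p * (if d ∈ Ystar t p then 1 else 0) := by
        intro p hp
        congr 1
        by_cases h : d ∈ Ystar t p <;> simp [Finset.mem_filter, Ystar_mem_MCfin hp, h]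
      rw [e1, Finset.sum_congr rfl e2, chi_eq_sum ht.1 hY₀ hd]
      have hrw : ∀ p ∈ uncS t, vY t Y₀ p * (if d ∈ Ystar t p then (1:ℤ) else 0) =
          ∑ q ∈ uncS t, ((if d.dropLast <+: q then (1:ℤ) else 0)
            - (if d ∈ uncS t ∧ d <+: q then 1 else 0)) *
              (vY t Y₀ p * vY t (Ystar t p) q) := by
        intro p hp
        rw [chi_eq_sum ht.1 (Ystar_mem_MCfin hp) hd, Finset.mul_sum]
        exact Finset.sum_congr rfl fun q _ => by ring
      rw [Finset.sum_congr rfl hrw, Finset.sum_comm]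
      have hinner : ∀ q ∈ uncS t,
          ∑ p ∈ uncS t, ((if d.dropLast <+: q then (1:ℤ) else 0)
            - (if d ∈ uncS t ∧ d <+: q then 1 else 0)) *
              (vY t Y₀ p * vY t (Ystar t p) q) =
          ((if d.dropLast <+: q then (1:ℤ) else 0)
            - (if d ∈ uncS t ∧ d <+: q then 1 else 0)) * vY t Y₀ q := by
        intro q hq
        rw [← Finset.mul_sum, hkey q hq]
      rw [Finset.sum_congr rfl hinner, sub_self]
    have hfin := H m hm
    rw [hsum (MCfin t) n] at hfin
    rw [if_pos hY₀] at hfin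
    unfold pairZ
    have : ∀ p ∈ uncS t,
        (if p ∈ uncS t then n (Ystar t p) else 0) * vY t Y₀ p =
          vY t Y₀ p * (if Ystar t p ∈ MCfin t then n (Ystar t p) else 0) := by
      intro p hp
      rw [if_pos hp, if_pos (Ystar_mem_MCfin hp), mul_comm]
    rw [Finset.sum_congr rfl this]
    linarith
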